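/- Fix r ≥ 2, m ≥ 1, and let A_k = I_{r^{m-k}} ⊗ 𝟙_{1/r} ⊗ I_{r^{k-1}} for k ∈ [m]. For i ∈ [r^m], define D_k(i) = {j : (A_k ⋯ A_1)^{ij} > 0} with D_0(i)={i}, and for k ∈ [m] define C_k(i) = D_k(i) \ D_{k-1}(i). Then the sets C_1(i),...,C_m(i) are pairwise disjoint and their union equals [r^m] \ {i}. Moreover |C_k(i)| = (r-1)·r^{k-1}. -/

import Mathlib

open Matrix BigOperators

/-- Kronecker product of square matrices, with blocks of `A ⊗ B` given by `A^{pq} • B`,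
reindexed to `Fin (M * N)`. -/
noncomputable def kron {M N : ℕ} (A : Matrix (Fin M) (Fin M) ℝ) (B : Matrix (Fin N) (Fin N) ℝ) :
    Matrix (Fin (M * N)) (Fin (M * N)) ℝ :=
  Matrix.reindex finProdFinEquiv finProdFinEquiv (Matrix.kroneckerMap (· * ·) A B)

/-- The n×n matrix with every entry equal to 1/n. -/
noncomputable def onesMat (n : ℕ) : Matrix (Fin n) (Fin n) ℝ := fun _ _ => 1 / (n : ℝ)


lemma sizeEq (r m : ℕ) (k : Fin m) : r ^ (m - 1 - k.1) * (r * r ^ k.1) = r ^ m := by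
  have hk : k.1 < m := k.isLt
  rw [← pow_succ', ← pow_add]
  congr 1
  omega

/-- The radix-r butterfly matrix `A_k = I_{r^(m-k)} ⊗ 𝟙_{1/r} ⊗ I_{r^(k-1)}`, where the
1-based index `k ∈ [m]` is represented by the 0-based `k : Fin m` (so `k.1 = k - 1`). -/
noncomputable def Ak (r m : ℕ) (k : Fin m) : Matrix (Fin (r ^ m)) (Fin (r ^ m)) ℝ :=
  Matrix.reindex (finCongr (sizeEq r m k)) (finCongr (sizeEq r m k))
    (kron (1 : Matrix (Fin (r ^ (m - 1 - k.1))) (Fin (r ^ (m - 1 - k.1))) ℝ)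
      (kron (onesMat r) (1 : Matrix (Fin (r ^ k.1)) (Fin (r ^ k.1)) ℝ)))

/-- The support of row i of the product A_k ⋯ A_1 (the empty product for k = 0,
giving D_0(i) = {i}). -/
def Dset (r m : ℕ) (k : ℕ) (hk : k ≤ m) (i : Fin (r ^ m)) : Set (Fin (r ^ m)) :=
  {j | 0 < ((List.ofFn (fun t : Fin k => Ak r m (Fin.castLE hk t))).reverse.prod) i j}

/-- C_k(i) = D_k(i) \ D_{k-1}(i), for 1-based k represented by k : Fin m (k.1 = k-1). -/
def Cset (r m : ℕ) (k : Fin m) (i : Fin (r ^ m)) : Set (Fin (r ^ m)) :=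
  Dset r m (k.1 + 1) k.isLt i \ Dset r m k.1 (Nat.le_of_lt k.isLt) i

/-- The sets C_1(i), ..., C_m(i) are pairwise disjoint, their union is everything except i,
and |C_k(i)| = (r-1) r^(k-1). -/
lemma kron_apply {M N : ℕ} (A : Matrix (Fin M) (Fin M) ℝ) (B : Matrix (Fin N) (Fin N) ℝ)
    (i j : Fin (M * N)) :
    kron A B i j = A i.divNat j.divNat * B i.modNat j.modNat := by
  simp [kron, finProdFinEquiv]

lemma ak_apply (r m : ℕ) (k : Fin m) (i j : Fin (r ^ m)) :
    Ak r m k i j =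
      (if i.1 / r ^ (k.1 + 1) = j.1 / r ^ (k.1 + 1) then (1:ℝ) else 0) * (1 / r) *
      (if i.1 % r ^ k.1 = j.1 % r ^ k.1 then (1:ℝ) else 0) := by
  rw [Ak]
  rw [Matrix.reindex_apply, Matrix.submatrix_apply]
  rw [kron_apply, kron_apply]
  rw [Matrix.one_apply, Matrix.one_apply, onesMat]
  have h1 : ∀ (x : Fin (r ^ m)),
      (((finCongr (sizeEq r m k)).symm x).divNat : ℕ) = x.1 / r ^ (k.1+1) := by
    intro x
    simp [Fin.coe_divNat, pow_succ']
  have h2 : ∀ (x : Fin (r ^ m)),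
      ((((finCongr (sizeEq r m k)).symm x).modNat).modNat : ℕ) = x.1 % r ^ k.1 := by
    intro x
    simp [Fin.coe_modNat, Nat.mod_mod_of_dvd _ (dvd_mul_left _ _)]
  simp only [Fin.ext_iff, h1, h2]
  ring

lemma ak_nonneg (r m : ℕ) (k : Fin m) (i j : Fin (r ^ m)) : 0 ≤ Ak r m k i j := by
  rw [ak_apply]
  positivity

lemma ak_pos_iff (r m : ℕ) (hr : 2 ≤ r) (k : Fin m) (i j : Fin (r ^ m)) :
    0 < Ak r m k i j ↔
      i.1 / r ^ (k.1 + 1) = j.1 / r ^ (k.1 + 1) ∧ i.1 % r ^ k.1 = j.1 % r ^ k.1 := by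
  rw [ak_apply]
  have hrpos : (0:ℝ) < 1 / r := by
    have : (0:ℝ) < r := by exact_mod_cast Nat.lt_of_lt_of_le (by norm_num) hr
    positivity
  constructor
  · intro h
    by_contra hc
    push_neg at hc
    rcases Classical.em (i.1 / r ^ (k.1 + 1) = j.1 / r ^ (k.1 + 1)) with h1 | h1
    · rw [if_pos h1, if_neg (hc h1)] at h; simp at h
    · rw [if_neg h1] at h; simp at h
  · rintro ⟨h1, h2⟩
    rw [if_pos h1, if_pos h2]
    simpa using hrpos

/-- The partial product matrix. -/
noncomputable def Pmat (r m : ℕ) (k : ℕ) (hk : k ≤ m) : Matrix (Fin (r ^ m)) (Fin (r ^ m)) ℝ :=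
  (List.ofFn (fun t : Fin k => Ak r m (Fin.castLE hk t))).reverse.prod

lemma pmat_succ (r m : ℕ) (k : ℕ) (hk : k + 1 ≤ m) :
    Pmat r m (k+1) hk = Ak r m ⟨k, hk⟩ * Pmat r m k (Nat.le_of_succ_le hk) := by
  rw [Pmat, Pmat, List.ofFn_succ', List.concat_eq_append, List.reverse_append]
  simp only [List.reverse_cons, List.reverse_nil, List.nil_append, List.singleton_append,
    List.prod_cons]
  rfl

lemma pmat_nonneg (r m : ℕ) (k : ℕ) : ∀ (hk : k ≤ m) (i j : Fin (r ^ m)),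
    0 ≤ Pmat r m k hk i j := by
  induction k with
  | zero =>
    intro hk i j
    simp only [Pmat, List.ofFn_zero, List.reverse_nil, List.prod_nil]
    rw [Matrix.one_apply]
    split <;> norm_num
  | succ k ih =>
    intro hk i j
    rw [pmat_succ, Matrix.mul_apply]
    exact Finset.sum_nonneg fun l _ =>
      mul_nonneg (ak_nonneg r m _ i l) (ih (Nat.le_of_succ_le hk) l j)

lemma div_eq_of_div_pow_le {a b r s t : ℕ} (hst : s ≤ t) (h : a / r ^ s = b / r ^ s) :
    a / r ^ t = b / r ^ t := by
  have : r ^ t = r ^ s * r ^ (t - s) := by rw [← pow_add]; congr 1; omega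
  rw [this, ← Nat.div_div_eq_div_mul, ← Nat.div_div_eq_div_mul, h]

lemma pmat_pos_iff (r m : ℕ) (hr : 2 ≤ r) (k : ℕ) :
    ∀ (hk : k ≤ m) (i j : Fin (r ^ m)),
      (0 < Pmat r m k hk i j ↔ i.1 / r ^ k = j.1 / r ^ k) := by
  induction k with
  | zero =>
    intro hk i j
    simp only [Pmat, List.ofFn_zero, List.reverse_nil, List.prod_nil, pow_zero, Nat.div_one]
    rw [Matrix.one_apply]
    constructor
    · intro h
      by_contra hc
      rw [if_neg (fun he : i = j => hc (by rw [he]))] at h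
      simp at h
    · intro h
      rw [if_pos (Fin.ext h)]
      norm_num
  | succ k ih =>
    intro hk i j
    have hk' := Nat.le_of_succ_le hk
    rw [pmat_succ, Matrix.mul_apply]
    have key : ∀ l : Fin (r ^ m),
        (0 < Ak r m ⟨k, hk⟩ i l * Pmat r m k hk' l j ↔
          (i.1 / r ^ (k + 1) = l.1 / r ^ (k + 1) ∧ i.1 % r ^ k = l.1 % r ^ k) ∧
            l.1 / r ^ k = j.1 / r ^ k) := by
      intro l
      rw [mul_pos_iff]
      have h1 := ak_nonneg r m ⟨k, hk⟩ i l
      have h2 := pmat_nonneg r m k hk' l j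
      have : ¬ (Ak r m ⟨k, hk⟩ i l < 0 ∧ Pmat r m k hk' l j < 0) := by
        rintro ⟨a, _⟩; linarith
      rw [or_iff_left this, ak_pos_iff r m hr, ih hk']
    constructor
    · intro h
      obtain ⟨l, _, hl⟩ := Finset.exists_lt_of_sum_lt
        (show (Finset.univ.sum fun _ : Fin (r ^ m) => (0:ℝ)) < _ by simpa using h)
      obtain ⟨⟨ha, _⟩, hb⟩ := (key l).1 hl
      rw [ha]
      exact div_eq_of_div_pow_le (Nat.le_succ k) hb
    · intro h
      -- construct the witness l
      have hrk : 0 < r ^ k := Nat.pow_pos (by omega)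
      set l0 : ℕ := (j.1 / r ^ k) * r ^ k + i.1 % r ^ k with hl0
      have hl0lt : l0 < r ^ m := by
        have h1 : i.1 % r ^ k < r ^ k := Nat.mod_lt _ hrk
        have h2 : j.1 / r ^ k < r ^ (m - k) := by
          apply Nat.div_lt_of_lt_mul
          have hh : r ^ k * r ^ (m - k) = r ^ m := by rw [← pow_add]; congr 1; omega
          rw [hh]; exact j.isLt
        calc l0 < (j.1 / r ^ k) * r ^ k + r ^ k := by omega
          _ = (j.1 / r ^ k + 1) * r ^ k := by ring
          _ ≤ r ^ (m - k) * r ^ k := Nat.mul_le_mul_right _ (by omega)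
          _ = r ^ m := by rw [← pow_add]; congr 1; omega
      set l : Fin (r ^ m) := ⟨l0, hl0lt⟩ with hldef
      have hmod : l.1 % r ^ k = i.1 % r ^ k := by
        show l0 % r ^ k = i.1 % r ^ k
        rw [hl0, Nat.mul_comm, Nat.mul_add_mod, Nat.mod_mod_of_dvd _ dvd_rfl]
      have hdivk : l.1 / r ^ k = j.1 / r ^ k := by
        show l0 / r ^ k = j.1 / r ^ k
        rw [hl0, Nat.mul_comm, Nat.mul_add_div hrk, Nat.div_eq_of_lt (Nat.mod_lt _ hrk),
          Nat.add_zero]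
      have hdivk1 : i.1 / r ^ (k + 1) = l.1 / r ^ (k + 1) := by
        have h1 : l.1 / r ^ (k+1) = j.1 / r ^ (k+1) := div_eq_of_div_pow_le (Nat.le_succ k) hdivk
        rw [h1, h]
      exact Finset.sum_pos'
        (fun x _ => mul_nonneg (ak_nonneg r m _ i x) (pmat_nonneg r m k hk' x j))
        ⟨l, Finset.mem_univ l, (key l).2 ⟨⟨hdivk1, hmod.symm ▸ rfl⟩, hdivk⟩⟩

lemma dset_eq (r m : ℕ) (hr : 2 ≤ r) (k : ℕ) (hk : k ≤ m) (i : Fin (r ^ m)) :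
    Dset r m k hk i = {j | i.1 / r ^ k = j.1 / r ^ k} := by
  ext j
  exact pmat_pos_iff r m hr k hk i j

lemma cset_eq (r m : ℕ) (hr : 2 ≤ r) (k : Fin m) (i : Fin (r ^ m)) :
    Cset r m k i =
      {j | i.1 / r ^ (k.1 + 1) = j.1 / r ^ (k.1 + 1) ∧ ¬ i.1 / r ^ k.1 = j.1 / r ^ k.1} := by
  rw [Cset, dset_eq r m hr _ k.isLt, dset_eq r m hr _ (Nat.le_of_lt k.isLt)]
  rfl

lemma dset_ncard (r m : ℕ) (hr : 2 ≤ r) (k : ℕ) (hk : k ≤ m) (i : Fin (r ^ m)) :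
    ({j : Fin (r ^ m) | i.1 / r ^ k = j.1 / r ^ k}).ncard = r ^ k := by
  have hrk : 0 < r ^ k := Nat.pow_pos (by omega)
  have hbound : (i.1 / r ^ k) * r ^ k + r ^ k ≤ r ^ m := by
    have h2 : i.1 / r ^ k < r ^ (m - k) := by
      apply Nat.div_lt_of_lt_mul
      have hh : r ^ k * r ^ (m - k) = r ^ m := by rw [← pow_add]; congr 1; omega
      rw [hh]; exact i.isLt
    calc (i.1 / r ^ k) * r ^ k + r ^ k = (i.1 / r ^ k + 1) * r ^ k := by ring
      _ ≤ r ^ (m - k) * r ^ k := Nat.mul_le_mul_right _ (by omega)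
      _ = r ^ m := by rw [← pow_add]; congr 1; omega
  set e : Fin (r ^ k) → Fin (r ^ m) :=
    fun x => ⟨(i.1 / r ^ k) * r ^ k + x.1, by have := x.isLt; omega⟩ with he
  have hinj : Function.Injective e := by
    intro a b hab
    have : ((e a : Fin (r ^ m)) : ℕ) = (e b : ℕ) := by rw [hab]
    simp only [he] at this
    exact Fin.ext (by omega)
  have himg : e '' Set.univ = {j : Fin (r ^ m) | i.1 / r ^ k = j.1 / r ^ k} := by
    ext j
    simp only [Set.image_univ, Set.mem_range, Set.mem_setOf_eq]
    constructor
    · rintro ⟨x, rfl⟩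
      simp only [he]
      rw [Nat.mul_comm, Nat.mul_add_div hrk, Nat.div_eq_of_lt x.isLt, Nat.add_zero]
    · intro hj
      refine ⟨⟨j.1 % r ^ k, Nat.mod_lt _ hrk⟩, Fin.ext ?_⟩
      simp only [he]
      rw [hj]
      exact Nat.div_add_mod' j.1 (r ^ k)
  rw [← himg, Set.ncard_image_of_injective _ hinj, Set.ncard_univ, Nat.card_eq_fintype_card,
    Fintype.card_fin]

theorem butterfly_Cset_partition (r m : ℕ) (hr : 2 ≤ r) (hm : 1 ≤ m) (i : Fin (r ^ m)) :
    (∀ k k' : Fin m, k ≠ k' → Cset r m k i ∩ Cset r m k' i = ∅) ∧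
    (⋃ k : Fin m, Cset r m k i) = Set.univ \ {i} ∧
    (∀ k : Fin m, (Cset r m k i).ncard = (r - 1) * r ^ k.1) := by
  have key : ∀ k k' : Fin m, k.1 < k'.1 → Cset r m k i ∩ Cset r m k' i = ∅ := by
    intro k k' hkk'
    rw [cset_eq r m hr, cset_eq r m hr, Set.eq_empty_iff_forall_notMem]
    rintro j ⟨⟨h1, _⟩, ⟨_, h4⟩⟩
    exact h4 (div_eq_of_div_pow_le hkk' h1)
  refine ⟨?_, ?_, ?_⟩
  · intro k k' hne
    rcases Nat.lt_or_ge k.1 k'.1 with h | h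
    · exact key k k' h
    · have h' : k'.1 < k.1 := lt_of_le_of_ne h (fun he => hne (Fin.ext he.symm))
      rw [Set.inter_comm]
      exact key k' k h'
  · ext j
    simp only [Set.mem_iUnion, Set.mem_diff, Set.mem_univ, Set.mem_singleton_iff, true_and]
    constructor
    · rintro ⟨k, hk⟩
      rw [cset_eq r m hr] at hk
      rintro rfl
      exact hk.2 rfl
    · intro hji
      have h0 : ¬ i.1 / r ^ 0 = j.1 / r ^ 0 := by
        simpa [Fin.val_eq_val] using (Ne.symm hji)
      have hMm : i.1 / r ^ m = j.1 / r ^ m := by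
        rw [Nat.div_eq_of_lt i.isLt, Nat.div_eq_of_lt j.isLt]
      have hex : ∃ t, i.1 / r ^ t = j.1 / r ^ t := ⟨m, hMm⟩
      set K := Nat.find hex with hK
      have hKspec := Nat.find_spec hex
      have hKle : K ≤ m := Nat.find_le hMm
      have hK0 : K ≠ 0 := fun h => h0 (h ▸ hKspec)
      have hKmin : ¬ i.1 / r ^ (K - 1) = j.1 / r ^ (K - 1) :=
        Nat.find_min hex (by omega)
      refine ⟨⟨K - 1, by omega⟩, ?_⟩
      rw [cset_eq r m hr]
      refine ⟨?_, hKmin⟩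
      have : K - 1 + 1 = K := by omega
      rw [this]
      exact hKspec
  · intro k
    have hsub : Dset r m k.1 (Nat.le_of_lt k.isLt) i ⊆ Dset r m (k.1 + 1) k.isLt i := by
      rw [dset_eq r m hr, dset_eq r m hr]
      intro j hj
      exact div_eq_of_div_pow_le (Nat.le_succ k.1) hj
    rw [Cset, Set.ncard_diff hsub (Set.toFinite _)]
    rw [dset_eq r m hr, dset_eq r m hr, dset_ncard r m hr _ k.isLt,
      dset_ncard r m hr _ (Nat.le_of_lt k.isLt)]
    have hrk : 0 < r ^ k.1 := Nat.pow_pos (by omega)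
    rw [pow_succ, Nat.sub_mul, one_mul, Nat.mul_comm]
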